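/- Let Y be a compact convex subset of ℝ^m and f : ℝ^n × Y → ℝ continuous, such that f(·, y) is differentiable for each y and for a given x the maximizer y*(x) = argmax_{y∈Y} f(x, y) is unique, with (x,y) ↦ ∇_x f(x, y) continuous. Then φ(x) := max_{y∈Y} f(x, y) is differentiable at x with ∇φ(x) = ∇_x f(x, y*(x)). -/

import Mathlib

theorem stmt_18 (n m : ℕ)
    (Y : Set (EuclideanSpace ℝ (Fin m))) (hYne : Y.Nonempty)
    (hYcomp : IsCompact Y) (hYconv : Convex ℝ Y)
    (f : EuclideanSpace ℝ (Fin n) → EuclideanSpace ℝ (Fin m) → ℝ)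
    (hfcont : Continuous (fun p : EuclideanSpace ℝ (Fin n) × EuclideanSpace ℝ (Fin m) =>
      f p.1 p.2))
    (G : EuclideanSpace ℝ (Fin n) → EuclideanSpace ℝ (Fin m) → EuclideanSpace ℝ (Fin n))
    (hG : ∀ x' : EuclideanSpace ℝ (Fin n), ∀ y : EuclideanSpace ℝ (Fin m),
      HasGradientAt (fun x'' => f x'' y) (G x' y) x')
    (hGcont : Continuous (fun p : EuclideanSpace ℝ (Fin n) × EuclideanSpace ℝ (Fin m) =>
      G p.1 p.2))
    (x : EuclideanSpace ℝ (Fin n)) (ystar : EuclideanSpace ℝ (Fin m))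
    (hystar : ystar ∈ Y) (hmax : ∀ y ∈ Y, f x y ≤ f x ystar)
    (huniq : ∀ y ∈ Y, f x y = f x ystar → y = ystar)
    (φ : EuclideanSpace ℝ (Fin n) → ℝ)
    (hφ : ∀ x' : EuclideanSpace ℝ (Fin n), φ x' = sSup ((f x') '' Y)) :
    HasGradientAt φ (G x ystar) x := by
  have hfc : ∀ x', Continuous (f x') := fun x' => hfcont.comp (Continuous.prodMk_right x')
  -- uniform closeness of f x' to f x on Y
  have key : ∀ ε > 0, ∃ δ > 0, ∀ x', dist x' x < δ → ∀ y ∈ Y, |f x' y - f x y| < ε := by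
    intro ε hε
    have hK : IsCompact ((Metric.closedBall x 1) ×ˢ Y) :=
      (isCompact_closedBall x 1).prod hYcomp
    have huc := hK.uniformContinuousOn_of_continuous hfcont.continuousOn
    rw [Metric.uniformContinuousOn_iff] at huc
    obtain ⟨δ, hδ, hd⟩ := huc ε hε
    refine ⟨min δ 1, lt_min hδ one_pos, ?_⟩
    intro x' hx' y hy
    have h1 : ((x', y) : _ × _) ∈ (Metric.closedBall x 1) ×ˢ Y :=
      ⟨Metric.mem_closedBall.2 (le_of_lt (lt_of_lt_of_le hx' (min_le_right _ _))), hy⟩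
    have h2 : ((x, y) : _ × _) ∈ (Metric.closedBall x 1) ×ˢ Y :=
      ⟨Metric.mem_closedBall_self zero_le_one, hy⟩
    have hdlt : dist ((x', y) : _ × _) (x, y) < δ := by
      rw [Prod.dist_eq]
      simp only [dist_self]
      exact max_lt (lt_of_lt_of_le hx' (min_le_left _ _)) hδ
    have := hd _ h1 _ h2 hdlt
    rwa [Real.dist_eq] at this
  -- maximizers exist
  have hexist : ∀ x', ∃ y ∈ Y, ∀ z ∈ Y, f x' z ≤ f x' y := by
    intro x'
    obtain ⟨y, hy, hmax'⟩ := hYcomp.exists_isMaxOn hYne (hfc x').continuousOn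
    exact ⟨y, hy, fun z hz => hmax' hz⟩
  -- φ value at a maximizer
  have hbdd : ∀ x', BddAbove ((f x') '' Y) := fun x' =>
    (hYcomp.image (hfc x')).bddAbove
  have hφval : ∀ x', ∀ y ∈ Y, (∀ z ∈ Y, f x' z ≤ f x' y) → φ x' = f x' y := by
    intro x' y hy hmax'
    rw [hφ]
    apply IsGreatest.csSup_eq
    exact ⟨Set.mem_image_of_mem _ hy, by
      rintro _ ⟨z, hz, rfl⟩; exact hmax' z hz⟩
  have hφge : ∀ x', ∀ y ∈ Y, f x' y ≤ φ x' := by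
    intro x' y hy
    rw [hφ]
    exact le_csSup (hbdd x') (Set.mem_image_of_mem _ hy)
  -- continuity of argmax
  have hargmax : ∀ ε > 0, ∃ δ > 0, ∀ x', dist x' x < δ →
      ∀ y ∈ Y, (∀ z ∈ Y, f x' z ≤ f x' y) → dist y ystar < ε := by
    intro ε hε
    set K := Y ∩ {y | ε ≤ dist y ystar} with hKdef
    by_cases hK : K.Nonempty
    · have hKcomp : IsCompact K :=
        hYcomp.inter_right (isClosed_le continuous_const (continuous_id.dist continuous_const))
      obtain ⟨w, hwK, hwmax⟩ := hKcomp.exists_isMaxOn hK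
        ((hfc x).continuousOn.mono Set.inter_subset_left)
      have hwY : w ∈ Y := hwK.1
      have hwne : w ≠ ystar := by
        intro h
        have : ε ≤ dist w ystar := hwK.2
        rw [h, dist_self] at this
        linarith
      have hlt : f x w < f x ystar :=
        lt_of_le_of_ne (hmax w hwY) (fun h => hwne (huniq w hwY h))
      set c := f x ystar - f x w with hcdef
      have hc : 0 < c := by simp [hcdef]; linarith
      obtain ⟨δ, hδ, hd⟩ := key (c / 3) (by positivity)
      refine ⟨δ, hδ, ?_⟩
      intro x' hx' y hy hymax
      by_contra hcon
      have hyK : y ∈ K := ⟨hy, not_lt.1 hcon⟩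
      have h3 : f x y ≤ f x w := hwmax hyK
      have h1 := abs_lt.1 (hd x' hx' y hy)
      have h2 := abs_lt.1 (hd x' hx' ystar hystar)
      have h4 : f x' ystar ≤ f x' y := hymax ystar hystar
      simp only [hcdef] at *
      linarith
    · refine ⟨1, one_pos, fun x' _ y hy _ => ?_⟩
      by_contra h
      exact hK ⟨y, hy, not_lt.1 h⟩
  -- MVT lemma
  have hmvt : ∀ x' y, ∃ ξ, dist ξ x ≤ dist x' x ∧
      f x' y - f x y = inner ℝ (G ξ y) (x' - x) := by
    intro x' y
    set v := x' - x with hv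
    have hline : ∀ t : ℝ, HasDerivAt (fun t : ℝ => f (x + t • v) y)
        (inner ℝ (G (x + t • v) y) v : ℝ) t := by
      intro t
      have h1 : HasDerivAt (fun t : ℝ => x + t • v) v t := by
        simpa using ((hasDerivAt_id t).smul_const v).const_add x
      have h2 := (hasGradientAt_iff_hasFDerivAt.1 (hG (x + t • v) y)).comp_hasDerivAt t h1
      simpa [Function.comp_def] using h2
    have hcont : ContinuousOn (fun t : ℝ => f (x + t • v) y) (Set.Icc 0 1) :=
      (Continuous.continuousOn (continuous_iff_continuousAt.2
        fun t => (hline t).continuousAt))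
    obtain ⟨c, hc, hceq⟩ := exists_hasDerivAt_eq_slope (fun t : ℝ => f (x + t • v) y)
      (fun t => (inner ℝ (G (x + t • v) y) v : ℝ)) one_pos hcont (fun t _ => hline t)
    refine ⟨x + c • v, ?_, ?_⟩
    · rw [dist_eq_norm, dist_eq_norm]
      have : x + c • v - x = c • v := by abel
      rw [this, norm_smul, hv]
      have hc1 : |c| ≤ 1 := by
        rw [abs_of_pos hc.1]
        exact le_of_lt hc.2
      calc |c| * ‖x' - x‖ ≤ 1 * ‖x' - x‖ := by
            exact mul_le_mul_of_nonneg_right hc1 (norm_nonneg _)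
        _ = ‖x' - x‖ := one_mul _
    · have he1 : x + (1 : ℝ) • v = x' := by rw [one_smul, hv]; abel
      have he0 : x + (0 : ℝ) • v = x := by rw [zero_smul, add_zero]
      rw [he1, he0] at hceq
      rw [hceq]
      ring
  -- continuity of G at (x, ystar)
  have hGc : ∀ ε > 0, ∃ δ > 0, ∀ ξ y, dist ξ x < δ → dist y ystar < δ →
      ‖G ξ y - G x ystar‖ < ε := by
    intro ε hε
    have hca := hGcont.continuousAt (x := (x, ystar))
    rw [Metric.continuousAt_iff] at hca
    obtain ⟨δ, hδ, hd⟩ := hca ε hε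
    refine ⟨δ, hδ, fun ξ y h1 h2 => ?_⟩
    have := hd (show dist ((ξ, y) : _ × _) ((x, ystar) : _ × _) < δ by
      rw [Prod.dist_eq]; exact max_lt h1 h2)
    rwa [dist_eq_norm] at this
  -- conclusion
  rw [hasGradientAt_iff_isLittleO, Asymptotics.isLittleO_iff]
  intro ε hε
  obtain ⟨δ1, hδ1, hG1⟩ := hGc ε hε
  obtain ⟨δ2, hδ2, hA⟩ := hargmax δ1 hδ1
  have hmem : Metric.ball x (min δ1 δ2) ∈ nhds x :=
    Metric.ball_mem_nhds x (lt_min hδ1 hδ2)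
  filter_upwards [hmem] with x' hx'
  rw [Metric.mem_ball] at hx'
  have hx1 : dist x' x < δ1 := lt_of_lt_of_le hx' (min_le_left _ _)
  have hx2 : dist x' x < δ2 := lt_of_lt_of_le hx' (min_le_right _ _)
  obtain ⟨y', hy'Y, hy'max⟩ := hexist x'
  have hy'near : dist y' ystar < δ1 := hA x' hx2 y' hy'Y hy'max
  obtain ⟨ξ1, hξ1, heq1⟩ := hmvt x' ystar
  obtain ⟨ξ2, hξ2, heq2⟩ := hmvt x' y'
  have hb1 : ‖G ξ1 ystar - G x ystar‖ < ε :=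
    hG1 ξ1 ystar (lt_of_le_of_lt hξ1 hx1) (by rw [dist_self]; exact hδ1)
  have hb2 : ‖G ξ2 y' - G x ystar‖ < ε :=
    hG1 ξ2 y' (lt_of_le_of_lt hξ2 hx1) hy'near
  have hφx : φ x = f x ystar := hφval x ystar hystar hmax
  have hφx' : φ x' = f x' y' := hφval x' y' hy'Y hy'max
  have hlow : f x' ystar - f x ystar ≤ φ x' - φ x := by
    rw [hφx]
    have := hφge x' ystar hystar
    linarith
  have hup : φ x' - φ x ≤ f x' y' - f x y' := by
    rw [hφx']
    have := hφge x y' hy'Y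
    linarith
  have hcs1 : |(inner ℝ (G ξ1 ystar - G x ystar) (x' - x) : ℝ)| ≤ ε * ‖x' - x‖ := by
    refine le_trans (abs_real_inner_le_norm _ _) ?_
    exact mul_le_mul_of_nonneg_right (le_of_lt hb1) (norm_nonneg _)
  have hcs2 : |(inner ℝ (G ξ2 y' - G x ystar) (x' - x) : ℝ)| ≤ ε * ‖x' - x‖ := by
    refine le_trans (abs_real_inner_le_norm _ _) ?_
    exact mul_le_mul_of_nonneg_right (le_of_lt hb2) (norm_nonneg _)
  have hsub1 : (inner ℝ (G ξ1 ystar - G x ystar) (x' - x) : ℝ) =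
      inner ℝ (G ξ1 ystar) (x' - x) - inner ℝ (G x ystar) (x' - x) := inner_sub_left _ _ _
  have hsub2 : (inner ℝ (G ξ2 y' - G x ystar) (x' - x) : ℝ) =
      inner ℝ (G ξ2 y') (x' - x) - inner ℝ (G x ystar) (x' - x) := inner_sub_left _ _ _
  rw [Real.norm_eq_abs, abs_le]
  have ha1 := abs_le.1 hcs1
  have ha2 := abs_le.1 hcs2
  rw [hsub1] at ha1
  rw [hsub2] at ha2
  constructor
  · have h := hlow
    rw [heq1] at h
    linarith [ha1.1]
  · have h := hup
    rw [heq2] at h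
    linarith [ha2.2]
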